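/- For every integer n ≥ 1 and every real number x, f_n(x) ∈ [−1, 1]. -/

import Mathlib

/-- The ±1 Thue–Morse sequence: `u n = (-1)^(s₂(n)+1)` where `s₂` is the binary digit sum. -/
def u (n : ℕ) : ℤ := (-1) ^ ((Nat.digits 2 n).sum + 1)

/-- The "Pascal triangle" associated to the Thue–Morse sequence:
`Sig k n` is `Σ^k_n` (k the superscript, n the subscript). -/
def Sig : ℕ → ℕ → ℤ
  | k, 0 => u k
  | 0, _ + 1 => 0
  | k + 1, n + 1 => Sig k n + Sig k (n + 1)

/-- The renormalized points `x^k_n = 2^{-(n-1)(n-2)/2} Σ^k_n`. -/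
noncomputable def xkn (n k : ℕ) : ℝ := (Sig k n : ℝ) / 2 ^ ((n - 1) * (n - 2) / 2)

/-- The piecewise linear interpolation `f n` of the points `x^k_n` at `k/2^{n-1}`,
vanishing on the nonpositive reals. -/
noncomputable def f (n : ℕ) (x : ℝ) : ℝ :=
  if x ≤ 0 then 0
  else
    xkn n ⌊(2 : ℝ) ^ (n - 1) * x⌋₊ +
      (2 : ℝ) ^ (n - 1) * (x - (⌊(2 : ℝ) ^ (n - 1) * x⌋₊ : ℝ) / 2 ^ (n - 1)) *
        (xkn n (⌊(2 : ℝ) ^ (n - 1) * x⌋₊ + 1) - xkn n ⌊(2 : ℝ) ^ (n - 1) * x⌋₊)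

/-! ### Auxiliary lemmas -/

lemma u_two_mul (k : ℕ) : u (2 * k) = u k := by
  rcases Nat.eq_zero_or_pos k with h | h
  · simp [h]
  · unfold u
    rw [Nat.digits_def' (by norm_num) (by omega)]
    simp [Nat.mul_div_cancel_left, Nat.mul_mod_right]

lemma u_two_mul_add_one (k : ℕ) : u (2 * k + 1) = -u k := by
  unfold u
  rw [Nat.digits_def' (by norm_num) (by omega)]
  have h1 : (2 * k + 1) % 2 = 1 := by omega
  have h2 : (2 * k + 1) / 2 = k := by omega
  rw [h1, h2]
  simp [pow_succ, pow_add]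

lemma u_flip : ∀ (L k : ℕ), k < 2 ^ L → u (2 ^ L + k) = -u k := by
  intro L
  induction L with
  | zero =>
    intro k hk
    interval_cases k
    · norm_num [u]
  | succ L ih =>
    intro k hk
    rcases Nat.even_or_odd k with ⟨m, hm⟩ | ⟨m, hm⟩
    · have : 2 ^ (L+1) + k = 2 * (2 ^ L + m) := by subst hm; ring
      rw [this, u_two_mul, ih m (by omega), hm]
      rw [show m + m = 2 * m by ring, u_two_mul]
    · have : 2 ^ (L+1) + k = 2 * (2 ^ L + m) + 1 := by subst hm; ring
      rw [this, u_two_mul_add_one, ih m (by omega), hm, u_two_mul_add_one]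

lemma Sig_succ_succ (k n : ℕ) : Sig (k+1) (n+1) = Sig k n + Sig k (n+1) := rfl

lemma sum_step (A : ℕ → ℤ) (n k : ℕ) :
    ∑ j ∈ Finset.range (n+1), (((k+1).choose j : ℤ)) * A (n+1-j)
      = (∑ j ∈ Finset.range n, ((k.choose j : ℤ)) * A (n-j))
        + ∑ j ∈ Finset.range (n+1), ((k.choose j : ℤ)) * A (n+1-j) := by
  rw [Finset.sum_range_succ' (fun j => (((k+1).choose j : ℤ)) * A (n+1-j)) n,
      Finset.sum_range_succ' (fun j => ((k.choose j : ℤ)) * A (n+1-j)) n]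
  simp only [Nat.choose_succ_succ, Nat.succ_sub_succ, Nat.choose_zero_right, Nat.cast_add]
  rw [Finset.sum_congr rfl (fun j _ => add_mul ((k.choose j : ℤ)) ((k.choose (j+1) : ℤ)) _),
      Finset.sum_add_distrib]
  push_cast
  ring

/-- The master reflection identity. -/
lemma master : ∀ (n L k : ℕ), k < 2^L →
    Sig (2^L + k) n = -Sig k n + ∑ j ∈ Finset.range n, ((k.choose j : ℤ)) * Sig (2^L) (n-j) := by
  intro n
  induction n with
  | zero => intro L k hk; simpa [Sig] using u_flip L k hk
  | succ n ih =>
    intro L k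
    induction k with
    | zero =>
      intro _
      rw [Finset.sum_range_succ' (fun j => (((0:ℕ).choose j : ℤ)) * Sig (2^L) (n+1-j)) n]
      simp [Sig]
    | succ k ihk =>
      intro hk
      have h1 := ih L k (by omega)
      have h2 := ihk (by omega)
      have hrec : Sig (2^L + (k+1)) (n+1) = Sig (2^L + k) n + Sig (2^L + k) (n+1) := by
        rw [show 2^L + (k+1) = (2^L + k) + 1 by ring, Sig_succ_succ]
      rw [hrec, h1, h2, Sig_succ_succ, sum_step (fun i => Sig (2^L) i)]
      ring

/-- The master reflection identity, including the right endpoint, for positive rows. -/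
lemma master_le (n L k : ℕ) (hk : k ≤ 2^L) :
    Sig (2^L + k) (n+1) = -Sig k (n+1)
      + ∑ j ∈ Finset.range (n+1), ((k.choose j : ℤ)) * Sig (2^L) (n+1-j) := by
  rcases lt_or_eq_of_le hk with h | h
  · exact master (n+1) L k h
  · subst h
    have hL : (1:ℕ) ≤ 2^L := Nat.one_le_two_pow
    obtain ⟨k0, hk0⟩ : ∃ k0, 2^L = k0 + 1 := ⟨2^L - 1, by omega⟩
    have hlt : k0 < 2^L := by omega
    have h1 := master n L k0 hlt
    have h2 := master (n+1) L k0 hlt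
    rw [show 2^L + 2^L = (2^L + k0) + 1 by omega, Sig_succ_succ, h1, h2, hk0,
        sum_step (fun i => Sig (k0+1) i), Sig_succ_succ]
    ring

/-- `Sig (2^L) i = 0` for `1 ≤ i ≤ L`. -/
lemma Sig_pow_eq_zero : ∀ (L i : ℕ), 1 ≤ i → i ≤ L → Sig (2^L) i = 0 := by
  intro L
  induction L with
  | zero => omega
  | succ L ih =>
    intro i h1 h2
    rcases Nat.eq_zero_or_pos L with rfl | hL'
    · interval_cases i
      norm_num [Sig, u]
    · obtain ⟨m, rfl⟩ : ∃ m, i = m + 1 := ⟨i-1, by omega⟩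
      have h := master_le m L (2^L) le_rfl
      rw [show (2:ℕ)^(L+1) = 2^L + 2^L by ring, h,
        Finset.sum_range_succ' (fun j => (((2^L : ℕ).choose j : ℤ)) * Sig (2^L) (m+1-j)) m]
      have hz : ∀ x ∈ Finset.range m,
          (((2^L : ℕ).choose (x+1) : ℤ)) * Sig (2^L) (m+1-(x+1)) = 0 := by
        intro x hx
        rw [Finset.mem_range] at hx
        rw [ih (m+1-(x+1)) (by omega) (by omega)]
        ring
      rw [Finset.sum_eq_zero hz]
      simp

/-- Reflection at the half period. -/
lemma half_reflect (m k : ℕ) (hk : k ≤ 2^m) :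
    Sig (2^m + k) (m+1) = -Sig k (m+1) + Sig (2^m) (m+1) := by
  rw [master_le m m k hk,
    Finset.sum_range_succ' (fun j => ((k.choose j : ℤ)) * Sig (2^m) (m+1-j)) m]
  have hz : ∀ x ∈ Finset.range m, ((k.choose (x+1) : ℤ)) * Sig (2^m) (m+1-(x+1)) = 0 := by
    intro x hx
    rw [Finset.mem_range] at hx
    rw [Sig_pow_eq_zero m (m+1-(x+1)) (by omega) (by omega)]
    ring
  rw [Finset.sum_eq_zero hz]
  simp

/-- Antiperiodicity at scales `2^L` with `L ≥ n`. -/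
lemma antiperiod (m L k : ℕ) (hnL : m + 1 ≤ L) (hk : k ≤ 2^L) :
    Sig (2^L + k) (m+1) = -Sig k (m+1) := by
  rw [master_le m L k hk]
  have hz : ∀ x ∈ Finset.range (m+1), ((k.choose x : ℤ)) * Sig (2^L) (m+1-x) = 0 := by
    intro x hx
    rw [Finset.mem_range] at hx
    rw [Sig_pow_eq_zero L (m+1-x) (by omega) (by omega)]
    ring
  rw [Finset.sum_eq_zero hz]
  simp

/-- The bound `B n = 2^{(n-1)(n-2)/2}`. -/
def bnd (n : ℕ) : ℤ := 2 ^ ((n-1)*(n-2)/2)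

lemma bnd_pos (n : ℕ) : 0 < bnd n := pow_pos (by norm_num) _

lemma tri_step (m : ℕ) : (m+1)*m/2 = m + m*(m-1)/2 := by
  rcases m with _ | b
  · rfl
  · rw [show (b+1+1)*(b+1) = 2*(b+1) + (b+1)*b by ring, Nat.mul_add_div (by norm_num)]
    simp

lemma bnd_step (m : ℕ) : bnd (m+2) = 2^m * bnd (m+1) := by
  unfold bnd
  rw [show (m+2-1) = m+1 by omega, show (m+2-2) = m by omega,
      show (m+1-1) = m by omega, show (m+1-2) = m-1 by omega,
      tri_step, pow_add]

/-- Main inductive bound: on `[0, 2^n]`, `Sig · n ∈ [-bnd n, 0]`, with value `-bnd n`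
at the half period. -/
lemma sig_bound : ∀ m : ℕ,
    (∀ k, k ≤ 2^(m+1) → -bnd (m+1) ≤ Sig k (m+1) ∧ Sig k (m+1) ≤ 0)
      ∧ Sig (2^m) (m+1) = -bnd (m+1) := by
  intro m
  induction m with
  | zero =>
    constructor
    · intro k hk
      interval_cases k <;> norm_num [Sig, u, bnd]
    · norm_num [Sig, u, bnd]
  | succ m ih =>
    obtain ⟨hP, hE⟩ := ih
    have mono : ∀ k d, k + d ≤ 2^(m+1) → Sig (k+d) (m+2) ≤ Sig k (m+2) := by
      intro k d
      induction d with
      | zero => intro _; simp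
      | succ d ihd =>
        intro h
        have h1 : Sig (k+d) (m+1) ≤ 0 := (hP (k+d) (by omega)).2
        calc Sig (k+(d+1)) (m+2) = Sig (k+d) (m+1) + Sig (k+d) (m+2) := by
              rw [show k+(d+1) = (k+d)+1 by ring, Sig_succ_succ]
          _ ≤ Sig (k+d) (m+2) := by linarith
          _ ≤ Sig k (m+2) := ihd (by omega)
    have upper : ∀ k, k ≤ 2^(m+1) → Sig k (m+2) ≤ 0 := by
      intro k hk
      have := mono 0 k (by omega)
      simpa [Sig] using this
    have hrefl : ∀ j, j ≤ 2^m → Sig (2^m + j) (m+1) = -Sig j (m+1) - bnd (m+1) := by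
      intro j hj
      rw [half_reflect m j hj, hE]
      ring
    have ramp : ∀ j, j ≤ 2^m →
        Sig (2^m + j) (m+2) = Sig (2^m) (m+2) - j * bnd (m+1) - Sig j (m+2) := by
      intro j
      induction j with
      | zero => intro _; simp [Sig]
      | succ j ihj =>
        intro hj
        have h1 := ihj (by omega)
        have h2 := hrefl j (by omega)
        calc Sig (2^m + (j+1)) (m+2)
            = Sig (2^m + j) (m+1) + Sig (2^m + j) (m+2) := by
              rw [show 2^m+(j+1) = (2^m+j)+1 by ring, Sig_succ_succ]
          _ = Sig (2^m) (m+2) - (j+1) * bnd (m+1) - (Sig j (m+1) + Sig j (m+2)) := by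
              rw [h1, h2]; push_cast; ring
          _ = Sig (2^m) (m+2) - (j+1) * bnd (m+1) - Sig (j+1) (m+2) := by
              rw [Sig_succ_succ]
    have hE' : Sig (2^(m+1)) (m+2) = -bnd (m+2) := by
      have := ramp (2^m) le_rfl
      rw [show (2:ℕ)^(m+1) = 2^m + 2^m by ring, this, bnd_step]
      push_cast
      ring
    refine ⟨?_, hE'⟩
    intro k hk
    by_cases hk1 : k ≤ 2^(m+1)
    · have hu := upper k hk1
      have hl : -bnd (m+2) ≤ Sig k (m+2) := by
        have := mono k (2^(m+1) - k) (by omega)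
        rw [show k + (2^(m+1)-k) = 2^(m+1) by omega, hE'] at this
        linarith
      exact ⟨hl, hu⟩
    · obtain ⟨k', rfl⟩ : ∃ k', k = 2^(m+1) + k' := ⟨k - 2^(m+1), by omega⟩
      have hk' : k' ≤ 2^(m+1) := by
        have : (2:ℕ)^(m+2) = 2^(m+1) + 2^(m+1) := by ring
        omega
      have h1 := half_reflect (m+1) k' hk'
      rw [h1, hE']
      have hu := upper k' hk'
      have hl : -bnd (m+2) ≤ Sig k' (m+2) := by
        have := mono k' (2^(m+1) - k') (by omega)
        rw [show k' + (2^(m+1)-k') = 2^(m+1) by omega, hE'] at this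
        linarith
      constructor <;> linarith

/-- The global bound `|Σ^k_n| ≤ 2^{(n-1)(n-2)/2}`. -/
lemma sig_abs_le : ∀ (k m : ℕ), |Sig k (m+1)| ≤ bnd (m+1) := by
  intro k
  induction k using Nat.strong_induction_on with
  | _ k ih =>
    intro m
    by_cases hk : k ≤ 2^(m+1)
    · obtain ⟨hl, hu⟩ := (sig_bound m).1 k hk
      rw [abs_le]
      constructor <;> linarith [le_of_lt (bnd_pos (m+1))]
    · push_neg at hk
      set L := Nat.log 2 k with hL
      have hk0 : k ≠ 0 := by
        have := pow_pos (show (0:ℕ) < 2 by norm_num) (m+1)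
        omega
      have h1 : 2^L ≤ k := Nat.pow_log_le_self 2 hk0
      have h2 : k < 2^(L+1) := Nat.lt_pow_succ_log_self (by norm_num) k
      have hmL : m + 1 ≤ L := by
        by_contra hc
        push_neg at hc
        have : 2^(L+1) ≤ 2^(m+1) := Nat.pow_le_pow_right (by norm_num) (by omega)
        omega
      have hsplit : k = 2^L + (k - 2^L) := by omega
      have hlt : k - 2^L < k := by
        have : (0:ℕ) < 2^L := pow_pos (by norm_num) L
        omega
      have hle : k - 2^L ≤ 2^L := by
        have : (2:ℕ)^(L+1) = 2^L + 2^L := by ring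
        omega
      calc |Sig k (m+1)| = |Sig (2^L + (k - 2^L)) (m+1)| := by rw [← hsplit]
        _ = |Sig (k - 2^L) (m+1)| := by rw [antiperiod m L _ hmL hle, abs_neg]
        _ ≤ bnd (m+1) := ih _ hlt m

lemma xkn_abs_le (n k : ℕ) (hn : 1 ≤ n) : |xkn n k| ≤ 1 := by
  obtain ⟨m, rfl⟩ : ∃ m, n = m + 1 := ⟨n - 1, by omega⟩
  have h := sig_abs_le k m
  have hpow : (0:ℝ) < (2:ℝ) ^ (((m+1) - 1) * ((m+1) - 2) / 2) := by positivity
  rw [xkn, abs_div, abs_of_pos hpow, div_le_one hpow]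
  have hb : ((bnd (m+1) : ℤ) : ℝ) = (2:ℝ) ^ (((m+1) - 1) * ((m+1) - 2) / 2) := by
    rw [bnd]; push_cast; norm_num
  rw [← hb, ← Int.cast_abs]
  exact_mod_cast h

theorem f_mem_Icc (n : ℕ) (hn : 1 ≤ n) (x : ℝ) :
    f n x ∈ Set.Icc (-1 : ℝ) 1 := by
  rw [f]
  split_ifs with hx
  · constructor <;> norm_num
  · push_neg at hx
    have hp : (0:ℝ) < (2:ℝ) ^ (n-1) := by positivity
    set K : ℕ := ⌊(2 : ℝ) ^ (n - 1) * x⌋₊ with hK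
    set t : ℝ := (2 : ℝ) ^ (n - 1) * (x - (K : ℝ) / 2 ^ (n - 1)) with ht
    have ht' : t = (2 : ℝ) ^ (n - 1) * x - K := by
      rw [ht, mul_sub, mul_div_cancel₀ _ (ne_of_gt hp)]
    have ht0 : 0 ≤ t := by
      rw [ht']
      have := Nat.floor_le (a := (2 : ℝ) ^ (n - 1) * x) (by positivity)
      rw [← hK] at this
      linarith
    have ht1 : t ≤ 1 := by
      rw [ht']
      have := Nat.lt_floor_add_one ((2 : ℝ) ^ (n - 1) * x)
      rw [← hK] at this
      linarith
    have ha := xkn_abs_le n K hn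
    have hb := xkn_abs_le n (K+1) hn
    rw [abs_le] at ha hb
    obtain ⟨ha1, ha2⟩ := ha
    obtain ⟨hb1, hb2⟩ := hb
    constructor
    · nlinarith
    · nlinarith
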